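/- Let E ⊆ ℤ^p be a good semigroup ideal and let α ∈ ℤ^p and i ∈ {1,…,p} satisfy: Δ_i(α,E) = ∅ and Δ_{{i,j}}(α,E) ≠ ∅ for every j ≠ i. Then α ∈ E. -/

import Mathlib

open Finset

def DeltaJ {p : ℕ} (J : Finset (Fin p)) (α : Fin p → ℤ) (E : Set (Fin p → ℤ)) :
    Set (Fin p → ℤ) :=
  {v | v ∈ E ∧ (∀ j ∈ J, v j = α j) ∧ ∀ j ∉ J, α j < v j}

def Delta {p : ℕ} (α : Fin p → ℤ) (E : Set (Fin p → ℤ)) : Set (Fin p → ℤ) :=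
  ⋃ i : Fin p, DeltaJ {i} α E

def GoodIdeal {p : ℕ} (E : Set (Fin p → ℤ)) : Prop :=
  (∃ lam nu : Fin p → ℤ, (∀ v ∈ E, lam ≤ v) ∧ ∀ v, nu ≤ v → v ∈ E) ∧
  (∀ a ∈ E, ∀ b ∈ E, a ⊓ b ∈ E) ∧
  (∀ a ∈ E, ∀ b ∈ E, a ≠ b → ∀ i, a i = b i →
    ∃ η ∈ E, a i < η i ∧ (∀ j, min (a j) (b j) ≤ η j) ∧
      ∀ j, a j ≠ b j → η j = min (a j) (b j))

def RelMax {p : ℕ} (E : Set (Fin p → ℤ)) (α : Fin p → ℤ) : Prop :=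
  α ∈ E ∧ Delta α E = ∅ ∧ ∀ J : Finset (Fin p), 2 ≤ J.card → (DeltaJ J α E).Nonempty

def AbsMax {p : ℕ} (E : Set (Fin p → ℤ)) (β : Fin p → ℤ) : Prop :=
  β ∈ E ∧ ∀ J : Finset (Fin p), J ≠ ∅ → J ≠ Finset.univ → DeltaJ J β E = ∅

theorem stmt1 {p : ℕ} (hp : 2 ≤ p) (E : Set (Fin p → ℤ)) (hE : GoodIdeal E)
    (α : Fin p → ℤ) (i : Fin p) (h1 : DeltaJ {i} α E = ∅)
    (h2 : ∀ j, j ≠ i → (DeltaJ {i, j} α E).Nonempty) : α ∈ E := by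
  classical
  set t : Finset (Fin p) := Finset.univ.erase i with ht
  have hne : t.Nonempty := by
    have : 1 < Fintype.card (Fin p) := by simp only [Fintype.card_fin]; omega
    obtain ⟨j, hj⟩ := Fintype.exists_ne_of_one_lt_card this i
    exact ⟨j, by simp [ht, hj]⟩
  set f : Fin p → (Fin p → ℤ) := fun j =>
    if h : j ≠ i then (h2 j h).choose else α with hf
  have hfE : ∀ j ∈ t, f j ∈ E := by
    intro j hj
    have hji : j ≠ i := (Finset.mem_erase.mp hj).1
    simp only [hf, dif_pos hji]
    exact (h2 j hji).choose_spec.1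
  have hfi : ∀ j ∈ t, f j i = α i := by
    intro j hj
    have hji : j ≠ i := (Finset.mem_erase.mp hj).1
    simp only [hf, dif_pos hji]
    exact (h2 j hji).choose_spec.2.1 i (by simp)
  have hfj : ∀ j ∈ t, f j j = α j := by
    intro j hj
    have hji : j ≠ i := (Finset.mem_erase.mp hj).1
    simp only [hf, dif_pos hji]
    exact (h2 j hji).choose_spec.2.1 j (by simp)
  have hge : ∀ j ∈ t, ∀ k, α k ≤ f j k := by
    intro j hj k
    have hji : j ≠ i := (Finset.mem_erase.mp hj).1
    simp only [hf, dif_pos hji]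
    by_cases hk : k ∈ ({i, j} : Finset (Fin p))
    · exact le_of_eq ((h2 j hji).choose_spec.2.1 k hk).symm
    · exact le_of_lt ((h2 j hji).choose_spec.2.2 k hk)
  have hinfE : t.inf' hne f ∈ E := by
    apply Finset.inf'_mem E hE.2.1
    exact hfE
  have heq : t.inf' hne f = α := by
    funext k
    rw [Finset.inf'_apply]
    apply le_antisymm
    · by_cases hk : k = i
      · obtain ⟨j, hj⟩ := hne
        subst hk
        exact (Finset.inf'_le _ hj).trans (le_of_eq (hfi j hj))
      · have hkt : k ∈ t := by simp [ht, hk]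
        exact (Finset.inf'_le _ hkt).trans (le_of_eq (hfj k hkt))
    · exact Finset.le_inf' _ _ (fun j hj => hge j hj k)
  rwa [heq] at hinfE
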